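/- For every real θ with 0 < θ ≤ 1, x = 0 is the unique real solution of the equation x = tanh(θx); moreover the derivative of x ↦ x − tanh(θx) at x = 0 equals 1 − θ, which is strictly positive when 0 < θ < 1 and equals 0 when θ = 1. -/
import Mathlib

open Real

lemma aux_sinh_lt_mul_cosh {y : ℝ} (hy : 0 < y) : Real.sinh y < y * Real.cosh y := by
  have hmono : StrictMonoOn (fun x : ℝ => x * Real.cosh x - Real.sinh x) (Set.Ici 0) := by
    apply strictMonoOn_of_deriv_pos (convex_Ici 0)
    · exact ((continuous_id.mul Real.continuous_cosh).sub Real.continuous_sinh).continuousOn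
    · intro x hx
      rw [interior_Ici, Set.mem_Ioi] at hx
      have h : HasDerivAt (fun x : ℝ => x * Real.cosh x - Real.sinh x)
          (1 * Real.cosh x + x * Real.sinh x - Real.cosh x) x :=
        ((hasDerivAt_id x).mul (Real.hasDerivAt_cosh x)).sub (Real.hasDerivAt_sinh x)
      rw [h.deriv]
      have := Real.sinh_pos_iff.mpr hx
      nlinarith
  have := hmono (Set.self_mem_Ici) (Set.mem_Ici.2 hy.le) hy
  simpa using this

lemma aux_tanh_lt_self {y : ℝ} (hy : 0 < y) : Real.tanh y < y := by
  rw [Real.tanh_eq_sinh_div_cosh, div_lt_iff₀ (Real.cosh_pos y)]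
  exact aux_sinh_lt_mul_cosh hy

lemma aux_hasDerivAt_tanh (y : ℝ) :
    HasDerivAt Real.tanh (1 / Real.cosh y ^ 2) y := by
  have h : HasDerivAt (fun x => Real.sinh x / Real.cosh x)
      ((Real.cosh y * Real.cosh y - Real.sinh y * Real.sinh y) / Real.cosh y ^ 2) y :=
    (Real.hasDerivAt_sinh y).div (Real.hasDerivAt_cosh y) (Real.cosh_pos y).ne'
  have hq : Real.cosh y * Real.cosh y - Real.sinh y * Real.sinh y = 1 := by
    have := Real.cosh_sq_sub_sinh_sq y; nlinarith
  rw [hq] at h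
  exact h.congr_of_eventuallyEq (by filter_upwards with x using (Real.tanh_eq_sinh_div_cosh x))

theorem stmt1 (θ : ℝ) (h0 : 0 < θ) (h1 : θ ≤ 1) :
    {x : ℝ | x = Real.tanh (θ * x)} = {0} ∧
    deriv (fun x : ℝ => x - Real.tanh (θ * x)) 0 = 1 - θ ∧
    (θ < 1 → 0 < deriv (fun x : ℝ => x - Real.tanh (θ * x)) 0) ∧
    (θ = 1 → deriv (fun x : ℝ => x - Real.tanh (θ * x)) 0 = 0) := by
  have hderiv : deriv (fun x : ℝ => x - Real.tanh (θ * x)) 0 = 1 - θ := by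
    have h1' : HasDerivAt (fun x : ℝ => θ * x) θ 0 := by
      simpa using (hasDerivAt_id (0:ℝ)).const_mul θ
    have h2 : HasDerivAt (fun x : ℝ => Real.tanh (θ * x))
        ((1 / Real.cosh (θ * 0) ^ 2) * θ) 0 := (aux_hasDerivAt_tanh (θ * 0)).comp 0 h1'
    have h3 : HasDerivAt (fun x : ℝ => x - Real.tanh (θ * x))
        (1 - (1 / Real.cosh (θ * 0) ^ 2) * θ) 0 := (hasDerivAt_id 0).sub h2
    rw [h3.deriv]
    simp
  refine ⟨?_, hderiv, fun h => by rw [hderiv]; linarith, fun h => by rw [hderiv, h]; ring⟩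
  ext x
  simp only [Set.mem_setOf_eq, Set.mem_singleton_iff]
  constructor
  · intro hx
    by_contra hne
    rcases lt_or_gt_of_ne hne with hneg | hpos
    · have h1' : Real.tanh (θ * (-x)) < θ * (-x) :=
        aux_tanh_lt_self (mul_pos h0 (neg_pos.2 hneg))
      rw [mul_neg, Real.tanh_neg] at h1'
      have : θ * x < Real.tanh (θ * x) := by linarith
      nlinarith
    · have h1' : Real.tanh (θ * x) < θ * x := aux_tanh_lt_self (mul_pos h0 hpos)
      nlinarith
  · intro hx; simp [hx]
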